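/- For every ε > 0, the sequence of Hamming cubes (H_m)_{m ∈ ℕ} embeds into the sequence of lamplighter graphs (Lam(W_{2,n}))_{n ∈ ℕ} with distortion at most 1 + ε: for each m there exists n and a map f : H_m → Lam(W_{2,n}) with distortion ≤ 1 + ε. -/

import Mathlib

open scoped symmDiff


/-- Condition for a pair `(l, r)` to encode a vertex of the subdivided tree `W_{θ,n}`:
`l` is the binary address (of length `k ≤ n`) of the nearest node at or below the vertex,
and `r` is the distance from the parent node of `l` along the subdivided edge into `l`
(`r = θ^(n-k)` is the node `l` itself); the root is `([], 0)`. -/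
def WCond (θ n : ℕ) (p : List Bool × ℕ) : Prop :=
  p.1.length ≤ n ∧ p.2 ≤ θ ^ n ∧ (p.1 = [] → p.2 = 0) ∧
    (p.1 ≠ [] → 1 ≤ p.2 ∧ p.2 ≤ θ ^ (n - p.1.length))

instance (θ n : ℕ) : DecidablePred (WCond θ n) := fun p => by unfold WCond; infer_instance

/-- Vertices of the tree `W_{θ,n}`. -/
def Wvertex (θ n : ℕ) : Type := { p : List Bool × ℕ // WCond θ n p }

instance (θ n : ℕ) : DecidableEq (Wvertex θ n) := Subtype.instDecidableEq

/-- Weighted depth of a node `l` of the binary tree `B_n` in `W_{θ,n}`: the sum of the lengths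
`θ^(n-i)` of the subdivided edges on the way from the root to `l`. -/
def wdepth (θ n : ℕ) (l : List Bool) : ℕ := ∑ i ∈ Finset.range l.length, θ ^ (n - (i + 1))

/-- Distance of a vertex of `W_{θ,n}` from the root. -/
def wheight (θ n : ℕ) (v : Wvertex θ n) : ℕ := wdepth θ n v.1.1.dropLast + v.1.2

/-- Longest common prefix of two lists. -/
def commonPrefix : List Bool → List Bool → List Bool
  | a :: as, b :: bs => if a = b then a :: commonPrefix as bs else []
  | _, _ => []

/-- The shortest path metric of the tree `W_{θ,n}`. -/
def Wdist (θ n : ℕ) (x y : Wvertex θ n) : ℕ :=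
  if x.1.1.isPrefixOf y.1.1 ∨ y.1.1.isPrefixOf x.1.1 then
    max (wheight θ n x) (wheight θ n y) - min (wheight θ n x) (wheight θ n y)
  else wheight θ n x + wheight θ n y - 2 * wdepth θ n (commonPrefix x.1.1 y.1.1)

/-- The root of `W_{θ,n}`. -/
def Wroot (θ n : ℕ) : Wvertex θ n := ⟨([], 0), by simp [WCond]⟩

/-- The tree `W_{θ,n}` as a simple graph: edges are pairs of vertices at distance 1. -/
def WGraph (θ n : ℕ) : SimpleGraph (Wvertex θ n) where
  Adj x y := x ≠ y ∧ Wdist θ n x y = 1 ∧ Wdist θ n y x = 1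
  symm := ⟨fun _ _ ⟨h1, h2, h3⟩ => ⟨h1.symm, h3, h2⟩⟩
  loopless := ⟨fun _ h => h.1 rfl⟩

/-- The lamplighter graph over a graph `G`: vertices are pairs (set of lamps on, position of
the lamplighter), and moves either shift the lamplighter along an edge of `G` or toggle the
lamp at the current position. -/
def Lam {V : Type*} [DecidableEq V] (G : SimpleGraph V) : SimpleGraph (Finset V × V) where
  Adj p q := (p.1 = q.1 ∧ G.Adj p.2 q.2) ∨ (p.2 = q.2 ∧ p.1 ∆ q.1 = {p.2})
  symm := by
    constructor
    rintro ⟨A, x⟩ ⟨B, y⟩ (⟨h1, h2⟩ | ⟨h1, h2⟩)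
    · exact Or.inl ⟨h1.symm, h2.symm⟩
    · exact Or.inr ⟨h1.symm, by rw [symmDiff_comm, h2, h1]⟩
  loopless := by
    constructor
    rintro ⟨A, x⟩ (⟨_, h⟩ | ⟨_, h⟩)
    · exact G.loopless.irrefl x h
    · rw [symmDiff_self] at h
      exact Finset.singleton_ne_empty x h.symm

/-- The Hamming (`ℓ₁`) distance on the Hamming cube `H_m = {0,1}^m`. -/
def hamCubeDist {m : ℕ} (x y : Fin m → Bool) : ℕ :=
  (Finset.univ.filter fun i => x i ≠ y i).card

namespace HamLam
open SimpleGraph Finset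

variable {n : ℕ}

/-- Tree ancestor order on vertices of `W_{2,n}`. -/
def anc (v w : Wvertex 2 n) : Prop :=
  v.1.1 <+: w.1.1 ∧ (v.1.1 = w.1.1 → v.1.2 ≤ w.1.2)

instance (v w : Wvertex 2 n) : Decidable (anc v w) := by unfold anc; infer_instance

lemma anc_refl (v : Wvertex 2 n) : anc v v := ⟨List.prefix_refl _, fun _ => le_refl _⟩

lemma anc_trans {u v w : Wvertex 2 n} (h1 : anc u v) (h2 : anc v w) : anc u w := by
  refine ⟨h1.1.trans h2.1, fun h => ?_⟩
  rcases h1 with ⟨p1, i1⟩; rcases h2 with ⟨p2, i2⟩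
  have h2' : v.1.1 <+: u.1.1 := h ▸ p2
  have : u.1.1 = v.1.1 := p1.eq_of_length_le h2'.length_le
  exact (i1 this).trans (i2 (this.symm.trans h))

lemma wdepth_mono {a b : List Bool} (h : a.length ≤ b.length) :
    wdepth 2 n a ≤ wdepth 2 n b := by
  unfold wdepth
  exact Finset.sum_le_sum_of_subset (Finset.range_subset_range.2 h)

lemma wdepth_succ {l : List Bool} (h : l ≠ []) :
    wdepth 2 n l = wdepth 2 n l.dropLast + 2 ^ (n - l.length) := by
  unfold wdepth
  have hl : l.length - 1 + 1 = l.length := Nat.succ_pred_eq_of_pos (List.length_pos_iff.2 h)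
  rw [List.length_dropLast]
  conv_lhs => rw [← hl, Finset.sum_range_succ]
  rw [hl]

lemma wcond_r_le (v : Wvertex 2 n) : v.1.2 ≤ 2 ^ (n - v.1.1.length) := by
  rcases v with ⟨⟨l, r⟩, hc⟩
  by_cases h : l = []
  · have hr : r = 0 := hc.2.2.1 h
    subst hr; exact Nat.zero_le _
  · exact (hc.2.2.2 h).2

lemma wcond_r_pos {v : Wvertex 2 n} (h : v.1.1 ≠ []) : 1 ≤ v.1.2 :=
  (v.2.2.2.2 h).1

lemma wheight_lt_of_anc {v w : Wvertex 2 n} (h : anc v w) (hne : v ≠ w) :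
    wheight 2 n v < wheight 2 n w := by
  rcases h with ⟨hp, hi⟩
  by_cases he : v.1.1 = w.1.1
  · have hr : v.1.2 ≤ w.1.2 := hi he
    have hrne : v.1.2 ≠ w.1.2 := by
      intro hh; exact hne (Subtype.ext (Prod.ext he hh))
    unfold wheight; rw [he]; omega
  · -- proper prefix
    have hlen : v.1.1.length < w.1.1.length :=
      lt_of_le_of_ne hp.length_le (fun hh => he (hp.eq_of_length hh))
    have hwne : w.1.1 ≠ [] := by
      intro hh; rw [hh] at hlen; simp at hlen
    have hr1 : 1 ≤ w.1.2 := wcond_r_pos hwne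
    unfold wheight
    by_cases hv : v.1.1 = []
    · have : v.1.2 = 0 := v.2.2.2.1 hv
      have h0 : wdepth 2 n v.1.1.dropLast = 0 := by
        rw [hv]; simp [wdepth]
      rw [h0, this]
      have : (0:ℕ) < w.1.2 := hr1
      omega
    · have h1 : wdepth 2 n v.1.1.dropLast + v.1.2 ≤ wdepth 2 n v.1.1 := by
        rw [wdepth_succ hv]
        exact Nat.add_le_add_left (wcond_r_le v) _
      have h2 : wdepth 2 n v.1.1 ≤ wdepth 2 n w.1.1.dropLast := by
        apply wdepth_mono
        rw [List.length_dropLast]; omega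
      omega

lemma wheight_le_of_anc {v w : Wvertex 2 n} (h : anc v w) :
    wheight 2 n v ≤ wheight 2 n w := by
  by_cases he : v = w
  · rw [he]
  · exact (wheight_lt_of_anc h he).le

lemma anc_of_prefix {v w : Wvertex 2 n} (hp : v.1.1 <+: w.1.1) :
    anc v w ∨ anc w v := by
  by_cases he : v.1.1 = w.1.1
  · rcases le_total v.1.2 w.1.2 with h | h
    · exact Or.inl ⟨hp, fun _ => h⟩
    · exact Or.inr ⟨he ▸ List.prefix_refl _, fun _ => h⟩
  · exact Or.inl ⟨hp, fun hh => absurd hh he⟩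

lemma anc_total {v v' w : Wvertex 2 n} (h : anc v w) (h' : anc v' w) :
    anc v v' ∨ anc v' v := by
  rcases List.prefix_or_prefix_of_prefix h.1 h'.1 with hp | hp
  · exact anc_of_prefix hp
  · exact (anc_of_prefix hp).symm

lemma commonPrefix_prefix_left : ∀ a b : List Bool, commonPrefix a b <+: a := by
  intro a
  induction a with
  | nil => intro b; cases b <;> simp [commonPrefix]
  | cons x xs ih =>
    intro b
    cases b with
    | nil => simp [commonPrefix]
    | cons y ys =>
      by_cases h : x = y
      · simp only [commonPrefix, if_pos h]
        exact List.cons_prefix_cons.mpr ⟨rfl, ih ys⟩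
      · simp [commonPrefix, h]

end HamLam
namespace HamLam
variable {n : ℕ}

lemma commonPrefix_prefix_right : ∀ a b : List Bool, commonPrefix a b <+: b := by
  intro a
  induction a with
  | nil => intro b; cases b <;> simp [commonPrefix]
  | cons x xs ih =>
    intro b
    cases b with
    | nil => simp [commonPrefix]
    | cons y ys =>
      by_cases h : x = y
      · simp only [commonPrefix, if_pos h]
        exact List.cons_prefix_cons.mpr ⟨h, ih ys⟩
      · simp [commonPrefix, h]

lemma wheight_ge_of_proper_prefix {q : List Bool} {v : Wvertex 2 n}
    (hp : q <+: v.1.1) (hne : q ≠ v.1.1) :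
    wdepth 2 n q + 1 ≤ wheight 2 n v := by
  have hlne : v.1.1 ≠ [] := by
    intro h; rw [h] at hp; exact hne ((List.prefix_nil.mp hp).trans h.symm)
  have hr : 1 ≤ v.1.2 := wcond_r_pos hlne
  have hlen : q.length < v.1.1.length :=
    lt_of_le_of_ne hp.length_le (fun hh => hne (hp.eq_of_length hh))
  have : wdepth 2 n q ≤ wdepth 2 n v.1.1.dropLast := by
    apply wdepth_mono; rw [List.length_dropLast]; omega
  unfold wheight; omega

/-- Any edge of `W_{2,n}` joins a vertex to its immediate ancestor or descendant. -/
lemma adj_cases {c c' : Wvertex 2 n} (h : (WGraph 2 n).Adj c c') :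
    (anc c c' ∧ wheight 2 n c' = wheight 2 n c + 1) ∨
      (anc c' c ∧ wheight 2 n c = wheight 2 n c' + 1) := by
  obtain ⟨hne, hd, -⟩ := h
  unfold Wdist at hd
  by_cases hpre : c.1.1.isPrefixOf c'.1.1 ∨ c'.1.1.isPrefixOf c.1.1
  · rw [if_pos hpre] at hd
    have hanc : anc c c' ∨ anc c' c := by
      rcases hpre with hp | hp
      · exact anc_of_prefix (List.isPrefixOf_iff_prefix.mp hp)
      · exact (anc_of_prefix (List.isPrefixOf_iff_prefix.mp hp)).symm
    rcases hanc with ha | ha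
    · left; refine ⟨ha, ?_⟩
      have := wheight_le_of_anc ha
      omega
    · right; refine ⟨ha, ?_⟩
      have := wheight_le_of_anc ha
      omega
  · rw [if_neg hpre] at hd
    exfalso
    push_neg at hpre
    have h1 : ¬ (c.1.1 <+: c'.1.1) := fun hh =>
      hpre.1 (List.isPrefixOf_iff_prefix.mpr hh)
    have h2 : ¬ (c'.1.1 <+: c.1.1) := fun hh =>
      hpre.2 (List.isPrefixOf_iff_prefix.mpr hh)
    set q := commonPrefix c.1.1 c'.1.1 with hq
    have hq1 : q <+: c.1.1 := commonPrefix_prefix_left _ _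
    have hq2 : q <+: c'.1.1 := commonPrefix_prefix_right _ _
    have hne1 : q ≠ c.1.1 := fun hh => h1 (hh ▸ hq2)
    have hne2 : q ≠ c'.1.1 := fun hh => h2 (hh ▸ hq1)
    have g1 := wheight_ge_of_proper_prefix hq1 hne1
    have g2 := wheight_ge_of_proper_prefix hq2 hne2
    omega

lemma eq_of_anc_wheight {v w : Wvertex 2 n} (h : anc v w)
    (hh : wheight 2 n w ≤ wheight 2 n v) : v = w := by
  by_contra hne
  exact absurd hh (not_le.mpr (wheight_lt_of_anc h hne))

/-- At most one vertex changes its "is an ancestor of the current position" status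
along an edge of the tree. -/
lemma cut_unique {c c' v w : Wvertex 2 n} (h : (WGraph 2 n).Adj c c')
    (hv : ¬ (anc v c ↔ anc v c')) (hw : ¬ (anc w c ↔ anc w c')) : v = w := by
  have key : ∀ {a a' : Wvertex 2 n}, anc a a' → wheight 2 n a' = wheight 2 n a + 1 →
      ∀ {u : Wvertex 2 n}, ¬ (anc u a ↔ anc u a') → u = a' := by
    intro a a' ha hh u hu
    have h1 : ¬ anc u a := fun hx => hu ⟨fun _ => anc_trans hx ha, fun _ => hx⟩
    have h2 : anc u a' := by tauto
    have h3 : anc a u := by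
      rcases anc_total h2 ha with hx | hx
      · exact absurd hx h1
      · exact hx
    have h4 : u ≠ a := fun hx => h1 (hx ▸ anc_refl u)
    have h5 := wheight_lt_of_anc h3 (Ne.symm h4)
    have h6 := wheight_le_of_anc h2
    exact eq_of_anc_wheight h2 (by omega)
  rcases adj_cases h with ⟨ha, hh⟩ | ⟨ha, hh⟩
  · rw [key ha hh hv, key ha hh hw]
  · have hv' : ¬ (anc v c' ↔ anc v c) := fun hx => hv hx.symm
    have hw' : ¬ (anc w c' ↔ anc w c) := fun hx => hw hx.symm
    rw [key ha hh hv', key ha hh hw']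

end HamLam
namespace HamLam
open SimpleGraph Finset
variable {n : ℕ}

/-- Potential used for the lower bound: distance-to-target lamp count plus, for each cut
vertex in `U`, the number of forced future crossings of that cut. -/
def phiF (Bc U : Finset (Wvertex 2 n)) (s : Finset (Wvertex 2 n) × Wvertex 2 n) : ℕ :=
  (s.1 ∆ Bc).card +
    ∑ v ∈ U, (if ∃ w ∈ s.1 ∆ Bc, anc v w then (if anc v s.2 then 1 else 2)
              else (if anc v s.2 then 1 else 0))

lemma card_le_card_symmDiff_singleton {X Y : Finset (Wvertex 2 n)} {c : Wvertex 2 n}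
    (h : X ∆ Y = {c}) : X.card ≤ Y.card + 1 := by
  have hsub : X ⊆ Y ∪ {c} := by
    intro x hx
    by_cases hy : x ∈ Y
    · exact Finset.mem_union.mpr (Or.inl hy)
    · have : x ∈ X ∆ Y := Finset.mem_symmDiff.mpr (Or.inl ⟨hx, hy⟩)
      rw [h] at this
      exact Finset.mem_union.mpr (Or.inr this)
  calc X.card ≤ (Y ∪ {c}).card := Finset.card_le_card hsub
    _ ≤ Y.card + 1 := by
        simpa using Finset.card_union_le Y ({c} : Finset (Wvertex 2 n))

lemma symmDiff_symmDiff_right' (X Y B : Finset (Wvertex 2 n)) :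
    (X ∆ B) ∆ (Y ∆ B) = X ∆ Y := by
  ext x
  simp only [Finset.mem_symmDiff]
  tauto

lemma phi_step {Bc U : Finset (Wvertex 2 n)}
    {s t : Finset (Wvertex 2 n) × Wvertex 2 n}
    (h : (Lam (WGraph 2 n)).Adj s t) : phiF Bc U s ≤ phiF Bc U t + 1 := by
  rcases h with ⟨hC, hG⟩ | ⟨hpos, hsym⟩
  · -- move step
    unfold phiF
    rw [hC]
    have hsum : ∑ v ∈ U, (if ∃ w ∈ t.1 ∆ Bc, anc v w then (if anc v s.2 then 1 else 2)
              else (if anc v s.2 then 1 else 0)) ≤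
        (∑ v ∈ U, (if ∃ w ∈ t.1 ∆ Bc, anc v w then (if anc v t.2 then 1 else 2)
              else (if anc v t.2 then 1 else 0))) + 1 := by
      by_cases hex : ∃ v₀ ∈ U, ¬ (anc v₀ s.2 ↔ anc v₀ t.2)
      · obtain ⟨v₀, hv₀U, hv₀⟩ := hex
        have hadj : (WGraph 2 n).Adj s.2 t.2 := hG
        rw [← Finset.add_sum_erase U _ hv₀U, ← Finset.add_sum_erase U _ hv₀U]
        have heq : ∀ v ∈ U.erase v₀,
            (if ∃ w ∈ t.1 ∆ Bc, anc v w then (if anc v s.2 then 1 else 2)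
              else (if anc v s.2 then 1 else 0)) =
            (if ∃ w ∈ t.1 ∆ Bc, anc v w then (if anc v t.2 then 1 else 2)
              else (if anc v t.2 then 1 else 0)) := by
          intro v hv
          have hvne : v ≠ v₀ := Finset.ne_of_mem_erase hv
          have : anc v s.2 ↔ anc v t.2 := by
            by_contra hcc
            exact hvne (cut_unique hadj hcc hv₀)
          simp only [this]
        rw [Finset.sum_congr rfl heq]
        have : (if ∃ w ∈ t.1 ∆ Bc, anc v₀ w then (if anc v₀ s.2 then 1 else 2)
              else (if anc v₀ s.2 then 1 else 0)) ≤
            (if ∃ w ∈ t.1 ∆ Bc, anc v₀ w then (if anc v₀ t.2 then 1 else 2)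
              else (if anc v₀ t.2 then 1 else 0)) + 1 := by
          split_ifs <;> omega
        omega
      · push_neg at hex
        have : ∀ v ∈ U, (if ∃ w ∈ t.1 ∆ Bc, anc v w then (if anc v s.2 then 1 else 2)
              else (if anc v s.2 then 1 else 0)) =
            (if ∃ w ∈ t.1 ∆ Bc, anc v w then (if anc v t.2 then 1 else 2)
              else (if anc v t.2 then 1 else 0)) := by
          intro v hv
          simp only [hex v hv]
        rw [Finset.sum_congr rfl this]
        omega
    omega
  · -- toggle step
    unfold phiF
    have hX : (s.1 ∆ Bc) ∆ (t.1 ∆ Bc) = {s.2} := by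
      rw [symmDiff_symmDiff_right', hsym]
    have hcard : (s.1 ∆ Bc).card ≤ (t.1 ∆ Bc).card + 1 :=
      card_le_card_symmDiff_singleton hX
    have hsum : ∀ v ∈ U, (if ∃ w ∈ s.1 ∆ Bc, anc v w then (if anc v s.2 then 1 else 2)
              else (if anc v s.2 then 1 else 0)) =
        (if ∃ w ∈ t.1 ∆ Bc, anc v w then (if anc v t.2 then 1 else 2)
              else (if anc v t.2 then 1 else 0)) := by
      intro v hv
      rw [← hpos]
      by_cases hpend : (∃ w ∈ s.1 ∆ Bc, anc v w) ↔ (∃ w ∈ t.1 ∆ Bc, anc v w)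
      · rw [if_congr hpend rfl rfl]
      · have hanc : anc v s.2 := by
          have hmem : ∀ w, anc v w → ((w ∈ s.1 ∆ Bc ∧ w ∉ t.1 ∆ Bc) ∨
              (w ∈ t.1 ∆ Bc ∧ w ∉ s.1 ∆ Bc)) → w = s.2 := by
            intro w _ hw
            have : w ∈ (s.1 ∆ Bc) ∆ (t.1 ∆ Bc) := Finset.mem_symmDiff.mpr hw
            rw [hX] at this
            exact Finset.mem_singleton.mp this
          have hdis : ((∃ w ∈ s.1 ∆ Bc, anc v w) ∧ ¬ (∃ w ∈ t.1 ∆ Bc, anc v w)) ∨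
              ((∃ w ∈ t.1 ∆ Bc, anc v w) ∧ ¬ (∃ w ∈ s.1 ∆ Bc, anc v w)) := by
            by_cases hP : ∃ w ∈ s.1 ∆ Bc, anc v w
            · exact Or.inl ⟨hP, fun hQ => hpend ⟨fun _ => hQ, fun _ => hP⟩⟩
            · refine Or.inr ⟨?_, hP⟩
              by_contra hQ
              exact hpend ⟨fun p => absurd p hP, fun q => absurd q hQ⟩
          rcases hdis with ⟨h1, h2⟩ | ⟨h1, h2⟩
          · obtain ⟨w, hw, hvw⟩ := h1
            have hw2 : w ∉ t.1 ∆ Bc := fun hh => h2 ⟨w, hh, hvw⟩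
            have := hmem w hvw (Or.inl ⟨hw, hw2⟩)
            exact this ▸ hvw
          · obtain ⟨w, hw, hvw⟩ := h1
            have hw2 : w ∉ s.1 ∆ Bc := fun hh => h2 ⟨w, hh, hvw⟩
            have := hmem w hvw (Or.inr ⟨hw, hw2⟩)
            exact this ▸ hvw
        simp only [if_pos hanc]
        split_ifs <;> rfl
    rw [Finset.sum_congr rfl hsum]
    omega

end HamLam
namespace HamLam
open SimpleGraph Finset
variable {n : ℕ}

lemma phi_walk {Bc U : Finset (Wvertex 2 n)}
    {s t : Finset (Wvertex 2 n) × Wvertex 2 n}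
    (p : (Lam (WGraph 2 n)).Walk s t) : phiF Bc U s ≤ p.length + phiF Bc U t := by
  induction p with
  | nil => simp
  | cons h p ih =>
    have := phi_step (Bc := Bc) (U := U) h
    simp only [SimpleGraph.Walk.length_cons]
    omega

lemma wcond_node (p : List Bool) (hp : p.length ≤ n) :
    WCond 2 n (p, if p = [] then 0 else 2 ^ (n - p.length)) := by
  refine ⟨hp, ?_, ?_, ?_⟩
  · split
    · exact Nat.zero_le _
    · exact Nat.pow_le_pow_right (by norm_num) (Nat.sub_le _ _)
  · intro h; simp at h; simp [h]
  · intro h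
    rw [if_neg h]
    exact ⟨Nat.one_le_two_pow, le_refl _⟩

/-- The vertex of `W_{2,n}` corresponding to a node `p` of the binary tree. -/
def node (n : ℕ) (p : List Bool) (hp : p.length ≤ n) : Wvertex 2 n :=
  ⟨(p, if p = [] then 0 else 2 ^ (n - p.length)), wcond_node p hp⟩

lemma wheight_node (p : List Bool) (hp : p.length ≤ n) :
    wheight 2 n (node n p hp) = wdepth 2 n p := by
  unfold wheight node
  by_cases h : p = []
  · simp [h, wdepth]
  · simp only [if_neg h]
    exact (wdepth_succ h).symm

lemma wheight_mk (l : List Bool) (r : ℕ) (h : WCond 2 n (l, r)) :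
    wheight 2 n ⟨(l, r), h⟩ = wdepth 2 n l.dropLast + r := rfl

lemma adj_of_heights {x y : Wvertex 2 n} (hne : x ≠ y) (hp : x.1.1 <+: y.1.1)
    (hh : wheight 2 n y = wheight 2 n x + 1) : (WGraph 2 n).Adj x y := by
  have hp' : x.1.1.isPrefixOf y.1.1 := List.isPrefixOf_iff_prefix.mpr hp
  refine ⟨hne, ?_, ?_⟩ <;>
  · unfold Wdist
    rw [if_pos (by tauto)]
    omega

lemma adj_succ (l : List Bool) (r : ℕ) (h1 : WCond 2 n (l, r)) (h2 : WCond 2 n (l, r + 1)) :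
    (WGraph 2 n).Adj ⟨(l, r), h1⟩ ⟨(l, r + 1), h2⟩ := by
  apply adj_of_heights
  · intro h
    have := congrArg (fun v => v.1.2) h
    simp at this
  · exact List.prefix_refl _
  · rw [wheight_mk, wheight_mk]; omega

lemma adj_node_child (p : List Bool) (b : Bool) (hp : p.length + 1 ≤ n)
    (hc : WCond 2 n (p ++ [b], 1)) :
    (WGraph 2 n).Adj (node n p (by omega)) ⟨(p ++ [b], 1), hc⟩ := by
  apply adj_of_heights
  · intro h
    have := congrArg (fun v => v.1.1.length) h
    simp [node] at this
  · exact ⟨[b], rfl⟩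
  · rw [wheight_node, wheight_mk, List.dropLast_concat]

lemma wcond_edge (p : List Bool) (b : Bool) (r : ℕ) (hp : p.length + 1 ≤ n)
    (h1 : 1 ≤ r) (h2 : r ≤ 2 ^ (n - (p.length + 1))) : WCond 2 n (p ++ [b], r) := by
  have hlen : (p ++ [b]).length = p.length + 1 := by simp
  refine ⟨by simpa using hp, ?_, by simp, ?_⟩
  · calc r ≤ 2 ^ (n - (p.length + 1)) := h2
      _ ≤ 2 ^ n := Nat.pow_le_pow_right (by norm_num) (Nat.sub_le _ _)
  · intro _
    rw [hlen]
    exact ⟨h1, h2⟩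

/-- Walk from `node p` down into the subdivided edge `p ++ [b]`, to its `r`-th point. -/
lemma exists_descend (p : List Bool) (b : Bool) (hp : p.length + 1 ≤ n) :
    ∀ r (h1 : 1 ≤ r) (h2 : r ≤ 2 ^ (n - (p.length + 1))),
    ∃ w : (WGraph 2 n).Walk (node n p (by omega)) ⟨(p ++ [b], r), wcond_edge p b r hp h1 h2⟩,
      w.length = r ∧
        ∀ s (hs1 : 1 ≤ s) (hs2 : s ≤ r),
          (⟨(p ++ [b], s), wcond_edge p b s hp hs1 (le_trans hs2 h2)⟩ : Wvertex 2 n)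
            ∈ w.support := by
  intro r
  induction r with
  | zero => omega
  | succ r ih =>
    intro h1 h2
    by_cases hr : r = 0
    · subst hr
      refine ⟨SimpleGraph.Walk.cons (adj_node_child p b hp _) SimpleGraph.Walk.nil, by rfl, ?_⟩
      intro s hs1 hs2
      have : s = 1 := by omega
      subst this
      exact SimpleGraph.Walk.end_mem_support _
    · obtain ⟨w, hlen, hsup⟩ := ih (by omega) (by omega)
      refine ⟨w.concat (adj_succ (p ++ [b]) r _ _), ?_, ?_⟩
      · erw [SimpleGraph.Walk.length_concat, hlen]
      · intro s hs1 hs2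
        erw [SimpleGraph.Walk.support_concat, List.mem_append]
        by_cases hsr : s = r + 1
        · subst hsr; exact Or.inr (List.mem_singleton_self _)
        · exact Or.inl (hsup s hs1 (by omega))

/-- Walk from `node p` to the child node `p ++ [b]`. -/
lemma exists_descend_full (p : List Bool) (b : Bool) (hp : p.length + 1 ≤ n) :
    ∃ w : (WGraph 2 n).Walk (node n p (by omega)) (node n (p ++ [b]) (by simpa using hp)),
      w.length = 2 ^ (n - (p.length + 1)) ∧
        ∀ (v : Wvertex 2 n), v.1.1 = p ++ [b] → v ∈ w.support := by
  obtain ⟨w, hlen, hsup⟩ := exists_descend p b hp (2 ^ (n - (p.length + 1)))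
    Nat.one_le_two_pow (le_refl _)
  have hev : (⟨(p ++ [b], 2 ^ (n - (p.length + 1))),
      wcond_edge p b _ hp Nat.one_le_two_pow (le_refl _)⟩ : Wvertex 2 n) =
      node n (p ++ [b]) (by simpa using hp) := by
    apply Subtype.ext
    simp only [node]
    rw [if_neg (by simp)]
    simp
  refine ⟨w.copy rfl hev, ?_, ?_⟩
  · erw [SimpleGraph.Walk.length_copy, hlen]
  · intro v hv
    erw [SimpleGraph.Walk.support_copy]
    have hvne : v.1.1 ≠ [] := by rw [hv]; simp
    have h1 : 1 ≤ v.1.2 := wcond_r_pos hvne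
    have h2 : v.1.2 ≤ 2 ^ (n - (p.length + 1)) := by
      have := wcond_r_le v
      rw [hv] at this
      simpa using this
    have := hsup v.1.2 h1 h2
    have heq : v = (⟨(p ++ [b], v.1.2), wcond_edge p b v.1.2 hp h1 h2⟩ : Wvertex 2 n) :=
      Subtype.ext (Prod.ext hv rfl)
    rw [heq]; exact this

end HamLam
namespace HamLam
open SimpleGraph Finset
variable {n : ℕ}

/-- Closed DFS walk from `node p` visiting every vertex strictly below `p`. -/
lemma exists_subtree : ∀ (j : ℕ) (p : List Bool) (hp : p.length + j = n),
    ∃ w : (WGraph 2 n).Walk (node n p (by omega)) (node n p (by omega)),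
      w.length = j * 2 ^ (j + 1) ∧
        ∀ v : Wvertex 2 n, p <+: v.1.1 → v.1.1 ≠ p → v ∈ w.support := by
  intro j
  induction j with
  | zero =>
    intro p hp
    refine ⟨SimpleGraph.Walk.nil, by simp, ?_⟩
    intro v hpre hne
    exfalso
    have h1 : v.1.1.length ≤ n := v.2.1
    have h2 : p.length ≤ v.1.1.length := hpre.length_le
    exact hne (hpre.eq_of_length (by omega)).symm
  | succ j ih =>
    intro p hp
    have hpl : p.length + 1 ≤ n := by omega
    have hj : n - (p.length + 1) = j := by omega
    have key : ∀ b : Bool,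
        ∃ w : (WGraph 2 n).Walk (node n p (by omega)) (node n p (by omega)),
          w.length = 2 ^ j + (j * 2 ^ (j + 1) + 2 ^ j) ∧
            ∀ v : Wvertex 2 n, (p ++ [b]) <+: v.1.1 → v ∈ w.support := by
      intro b
      obtain ⟨wd, hdlen, hdsup⟩ := exists_descend_full p b hpl
      obtain ⟨ws, hslen, hssup⟩ := ih (p ++ [b]) (by simp; omega)
      refine ⟨wd.append (ws.append wd.reverse), ?_, ?_⟩
      · rw [SimpleGraph.Walk.length_append, SimpleGraph.Walk.length_append,
          SimpleGraph.Walk.length_reverse, hdlen, hslen, hj]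
      · intro v hpre
        by_cases hv : v.1.1 = p ++ [b]
        · have := hdsup v hv
          rw [SimpleGraph.Walk.mem_support_append_iff]
          exact Or.inl this
        · have := hssup v hpre hv
          rw [SimpleGraph.Walk.mem_support_append_iff,
            SimpleGraph.Walk.mem_support_append_iff]
          exact Or.inr (Or.inl this)
    obtain ⟨wt, hlt, hst⟩ := key true
    obtain ⟨wf, hlf, hsf⟩ := key false
    refine ⟨wt.append wf, ?_, ?_⟩
    · rw [SimpleGraph.Walk.length_append, hlt, hlf]
      have e1 : (2:ℕ) ^ (j + 1) = 2 ^ j * 2 := by rw [pow_succ]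
      have e2 : (2:ℕ) ^ (j + 1 + 1) = 2 ^ j * 2 * 2 := by rw [pow_succ, pow_succ]
      rw [e1, e2]; ring
    · intro v hpre hne
      obtain ⟨t, ht⟩ := hpre
      cases t with
      | nil =>
        have : p = v.1.1 := by simpa using ht
        exact absurd this.symm hne
      | cons b t' =>
        have hbt : (p ++ [b]) <+: v.1.1 := ⟨t', by rw [← ht]; simp⟩
        rw [SimpleGraph.Walk.mem_support_append_iff]
        cases b
        · exact Or.inr (hsf v hbt)
        · exact Or.inl (hst v hbt)

/-- Walk from the root to `node p`, visiting the whole subdivided edge into `p`. -/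
lemma exists_rootPath : ∀ (p : List Bool) (hp : p.length ≤ n),
    ∃ w : (WGraph 2 n).Walk (node n [] (by simp)) (node n p hp),
      w.length + 2 ^ (n - p.length) ≤ 2 ^ n ∧
        ∀ v : Wvertex 2 n, v.1.1 = p → v ∈ w.support := by
  intro p
  induction p using List.reverseRecOn with
  | nil =>
    intro hp
    refine ⟨SimpleGraph.Walk.nil, by simp, ?_⟩
    intro v hv
    have hv2 : v.1.2 = 0 := v.2.2.2.1 hv
    have : v = node n [] (by simp) := by
      apply Subtype.ext
      apply Prod.ext
      · simpa [node] using hv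
      · simpa [node] using hv2
    rw [this]
    exact SimpleGraph.Walk.start_mem_support _
  | append_singleton q b ihq =>
    intro hp
    have hq1 : q.length + 1 ≤ n := by simpa using hp
    obtain ⟨wq, hql, hqs⟩ := ihq (by omega)
    obtain ⟨wd, hdl, hds⟩ := exists_descend_full q b hq1
    refine ⟨wq.append wd, ?_, ?_⟩
    · rw [SimpleGraph.Walk.length_append, hdl]
      have e : n - q.length = (n - (q.length + 1)) + 1 := by omega
      rw [e, pow_succ] at hql
      simp only [List.length_append, List.length_singleton]
      omega
    · intro v hv
      rw [SimpleGraph.Walk.mem_support_append_iff]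
      exact Or.inr (hds v hv)

end HamLam
namespace HamLam
open SimpleGraph Finset
variable {n : ℕ}

/-- Closed walk from the root visiting every vertex with prefix `p`. -/
lemma exists_coordWalk (p : List Bool) (hp1 : p.length ≤ n) :
    ∃ w : (WGraph 2 n).Walk (node n [] (by simp)) (node n [] (by simp)),
      w.length ≤ 2 * 2 ^ n + (n - p.length) * 2 ^ (n - p.length + 1) ∧
        ∀ v : Wvertex 2 n, p <+: v.1.1 → v ∈ w.support := by
  obtain ⟨wr, hrl, hrs⟩ := exists_rootPath p hp1
  obtain ⟨ws, hsl, hss⟩ := exists_subtree (n := n) (n - p.length) p (by omega)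
  refine ⟨wr.append (ws.append wr.reverse), ?_, ?_⟩
  · rw [SimpleGraph.Walk.length_append, SimpleGraph.Walk.length_append,
      SimpleGraph.Walk.length_reverse, hsl]
    have h1 : wr.length ≤ 2 ^ n := le_trans (Nat.le_add_right wr.length _) hrl
    omega
  · intro v hpre
    by_cases hv : v.1.1 = p
    · rw [SimpleGraph.Walk.mem_support_append_iff]
      exact Or.inl (hrs v hv)
    · rw [SimpleGraph.Walk.mem_support_append_iff,
        SimpleGraph.Walk.mem_support_append_iff]
      exact Or.inr (Or.inl (hss v hpre hv))

/-- Closed walk from the root visiting every vertex whose address has a prefix in `L`. -/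
lemma exists_listWalk (k : ℕ) (hk : k ≤ n) :
    ∀ L : List (List Bool), (∀ p ∈ L, p.length = k) →
    ∃ w : (WGraph 2 n).Walk (node n [] (by simp)) (node n [] (by simp)),
      w.length ≤ L.length * (2 * 2 ^ n + (n - k) * 2 ^ (n - k + 1)) ∧
        ∀ p ∈ L, ∀ v : Wvertex 2 n, p <+: v.1.1 → v ∈ w.support := by
  intro L
  induction L with
  | nil => exact fun _ => ⟨SimpleGraph.Walk.nil, by simp, by simp⟩
  | cons q L ih =>
    intro hL
    obtain ⟨w1, h1l, h1s⟩ := exists_coordWalk (n := n) q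
      (by rw [hL q (by simp)]; omega)
    obtain ⟨w2, h2l, h2s⟩ := ih (fun p hp => hL p (by simp [hp]))
    refine ⟨w1.append w2, ?_, ?_⟩
    · rw [SimpleGraph.Walk.length_append]
      have hq : q.length = k := hL q (by simp)
      rw [hq] at h1l
      simp only [List.length_cons]
      calc w1.length + w2.length ≤
          (2 * 2 ^ n + (n - k) * 2 ^ (n - k + 1)) +
            L.length * (2 * 2 ^ n + (n - k) * 2 ^ (n - k + 1)) := by omega
        _ = (L.length + 1) * (2 * 2 ^ n + (n - k) * 2 ^ (n - k + 1)) := by ring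
    · intro p hp v hpre
      rw [SimpleGraph.Walk.mem_support_append_iff]
      rcases List.mem_cons.mp hp with h | h
      · exact Or.inl (h1s v (h ▸ hpre))
      · exact Or.inr (h2s p h v hpre)

/-- From a walk in `G` visiting a set `S`, get a lamplighter walk toggling exactly `S`. -/
lemma exists_lamWalk {V : Type*} [DecidableEq V] {G : SimpleGraph V} {a b : V}
    (w : G.Walk a b) :
    ∀ (C S : Finset V), (∀ v ∈ S, v ∈ w.support) →
    ∃ W : (Lam G).Walk (C, a) (C ∆ S, b), W.length = w.length + S.card := by
  induction w with
  | @nil u =>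
    intro C S hS
    have hsub : S ⊆ {u} := fun v hv => by simpa using hS v hv
    have hCE : C ∆ (∅ : Finset V) = C := by simpa using symmDiff_bot C
    rcases Finset.subset_singleton_iff.mp hsub with h | h
    · subst h
      refine ⟨SimpleGraph.Walk.nil.copy rfl (by rw [hCE]), ?_⟩
      simp
    · subst h
      have hadj : (Lam G).Adj (C, u) (C ∆ {u}, u) :=
        Or.inr ⟨rfl, symmDiff_symmDiff_cancel_left C {u}⟩
      refine ⟨SimpleGraph.Walk.cons hadj SimpleGraph.Walk.nil, ?_⟩
      simp
  | @cons x y z hadj w ih =>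
    intro C S hS
    by_cases ha : x ∈ S
    · have hS' : ∀ v ∈ S.erase x, v ∈ w.support := by
        intro v hv
        have h1 := hS v (Finset.mem_of_mem_erase hv)
        rcases List.mem_cons.mp (by simpa using h1) with h | h
        · exact absurd h (by simpa using Finset.ne_of_mem_erase hv)
        · exact h
      obtain ⟨W, hW⟩ := ih (C ∆ {x}) (S.erase x) hS'
      have htog : (Lam G).Adj (C, x) (C ∆ {x}, x) :=
        Or.inr ⟨rfl, symmDiff_symmDiff_cancel_left C {x}⟩
      have hmove : (Lam G).Adj (C ∆ {x}, x) (C ∆ {x}, y) := Or.inl ⟨rfl, hadj⟩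
      have hfix : C ∆ {x} ∆ S.erase x = C ∆ S := by
        rw [symmDiff_assoc]
        congr 1
        ext v
        simp only [Finset.mem_symmDiff, Finset.mem_singleton, Finset.mem_erase]
        by_cases hv : v = x <;> simp [hv, ha] <;> tauto
      refine ⟨SimpleGraph.Walk.cons htog (SimpleGraph.Walk.cons hmove
        (W.copy rfl (by rw [hfix]))), ?_⟩
      simp only [SimpleGraph.Walk.length_cons, SimpleGraph.Walk.length_copy, hW]
      have : S.card = (S.erase x).card + 1 := by
        rw [Finset.card_erase_of_mem ha]
        have := Finset.card_pos.mpr ⟨x, ha⟩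
        omega
      omega
    · have hS' : ∀ v ∈ S, v ∈ w.support := by
        intro v hv
        have h1 := hS v hv
        rcases List.mem_cons.mp (by simpa using h1) with h | h
        · exact absurd (h ▸ hv) ha
        · exact h
      obtain ⟨W, hW⟩ := ih C S hS'
      have hmove : (Lam G).Adj (C, x) (C, y) := Or.inl ⟨rfl, hadj⟩
      refine ⟨SimpleGraph.Walk.cons hmove W, ?_⟩
      simp only [SimpleGraph.Walk.length_cons, hW]
      omega

end HamLam
namespace HamLam
open SimpleGraph Finset

/-- All boolean lists of length exactly `j`. -/
def exactLists : ℕ → Finset (List Bool)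
  | 0 => {[]}
  | j + 1 => ((exactLists j).image (List.cons true)) ∪ ((exactLists j).image (List.cons false))

lemma mem_exactLists : ∀ j l, l ∈ exactLists j ↔ l.length = j := by
  intro j
  induction j with
  | zero => intro l; simp [exactLists, List.length_eq_zero_iff]
  | succ j ih =>
    intro l
    cases l with
    | nil => simp [exactLists]
    | cons b t =>
      simp only [exactLists, Finset.mem_union, Finset.mem_image, List.length_cons]
      constructor
      · rintro (⟨a, ha, he⟩ | ⟨a, ha, he⟩) <;>
        · cases he
          rw [(ih _).mp ha]
      · intro h
        cases b
        · exact Or.inr ⟨t, (ih t).mpr (by omega), rfl⟩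
        · exact Or.inl ⟨t, (ih t).mpr (by omega), rfl⟩

lemma card_exactLists : ∀ j, (exactLists j).card = 2 ^ j := by
  intro j
  induction j with
  | zero => simp [exactLists]
  | succ j ih =>
    rw [exactLists, Finset.card_union_of_disjoint, Finset.card_image_of_injective _
      (fun a b h => by injection h), Finset.card_image_of_injective _
      (fun a b h => by injection h), ih, pow_succ]
    · ring
    · rw [Finset.disjoint_left]
      rintro l hl1 hl2
      obtain ⟨a, -, ha⟩ := Finset.mem_image.mp hl1
      obtain ⟨c, -, hc⟩ := Finset.mem_image.mp hl2
      rw [← ha] at hc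
      simp at hc

variable {n : ℕ}

/-- The codes of the lamp set below address `a`. -/
def Tset (n k : ℕ) (a : List Bool) : Finset (List Bool × ℕ) :=
  (Finset.range (n - k + 1)).biUnion fun j =>
    ((exactLists j) ×ˢ Finset.Icc 1 (2 ^ (n - k - j))).image fun q => (a ++ q.1, q.2)

/-- The lamp set below address `a`, as vertices of `W_{2,n}`. -/
def Tfin (n k : ℕ) (a : List Bool) : Finset (Wvertex 2 n) :=
  (Tset n k a).subtype (WCond 2 n)

lemma card_Tset (k : ℕ) (hk : k ≤ n) (a : List Bool) (ha : a.length = k) :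
    (Tset n k a).card = (n - k + 1) * 2 ^ (n - k) := by
  unfold Tset
  rw [Finset.card_biUnion]
  · have : ∀ j ∈ Finset.range (n - k + 1),
        (((exactLists j) ×ˢ Finset.Icc 1 (2 ^ (n - k - j))).image
          fun q => (a ++ q.1, q.2)).card = 2 ^ (n - k) := by
      intro j hj
      rw [Finset.mem_range] at hj
      rw [Finset.card_image_of_injective _ (fun u v h => by
        have h1 := congrArg Prod.fst h
        have h2 := congrArg Prod.snd h
        simp only at h1 h2
        exact Prod.ext (List.append_cancel_left h1) h2)]
      rw [Finset.card_product, card_exactLists, Nat.card_Icc]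
      rw [Nat.add_sub_cancel, ← pow_add]
      congr 1
      omega
    rw [Finset.sum_congr rfl this, Finset.sum_const, Finset.card_range, smul_eq_mul]
  · intro u hu v hv huv
    rw [Function.onFun, Finset.disjoint_left]
    intro q hq1 hq2
    obtain ⟨w1, hw1, he1⟩ := Finset.mem_image.mp hq1
    obtain ⟨w2, hw2, he2⟩ := Finset.mem_image.mp hq2
    apply huv
    have l1 : q.1.length = a.length + u := by
      rw [← he1]
      simp [(mem_exactLists _ _).mp (Finset.mem_product.mp hw1).1]
    have l2 : q.1.length = a.length + v := by
      rw [← he2]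
      simp [(mem_exactLists _ _).mp (Finset.mem_product.mp hw2).1]
    omega

lemma mem_Tfin {k : ℕ} (hk : k ≤ n) {a : List Bool} (ha : a.length = k) (ha0 : a ≠ [])
    (v : Wvertex 2 n) : v ∈ Tfin n k a ↔ a <+: v.1.1 := by
  unfold Tfin
  erw [Finset.mem_subtype]
  constructor
  · intro hv
    obtain ⟨j, -, hj⟩ := Finset.mem_biUnion.mp hv
    obtain ⟨q, -, hq⟩ := Finset.mem_image.mp hj
    exact ⟨q.1, congrArg Prod.fst hq⟩
  · rintro ⟨t, ht⟩
    have hlen : v.1.1.length = k + t.length := by rw [← ht]; simp [ha]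
    have hle : v.1.1.length ≤ n := v.2.1
    have hne : v.1.1 ≠ [] := by
      intro h
      rw [h] at ht
      exact ha0 (List.append_eq_nil_iff.mp ht).1
    have hr1 : 1 ≤ v.1.2 := wcond_r_pos hne
    have hr2 : v.1.2 ≤ 2 ^ (n - v.1.1.length) := wcond_r_le v
    apply Finset.mem_biUnion.mpr
    refine ⟨t.length, Finset.mem_range.mpr (by omega), ?_⟩
    apply Finset.mem_image.mpr
    refine ⟨(t, v.1.2), ?_, ?_⟩
    · apply Finset.mem_product.mpr
      refine ⟨(mem_exactLists _ _).mpr rfl, Finset.mem_Icc.mpr ⟨hr1, ?_⟩⟩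
      have : n - k - t.length = n - v.1.1.length := by omega
      rw [this]
      exact hr2
    · exact Prod.ext (by rw [ht]) rfl

lemma card_Tfin {k : ℕ} (hk : k ≤ n) (hk0 : 1 ≤ k) {a : List Bool} (ha : a.length = k) :
    (Tfin n k a).card = (n - k + 1) * 2 ^ (n - k) := by
  unfold Tfin
  erw [Finset.card_subtype, Finset.filter_true_of_mem, card_Tset k hk a ha]
  intro q hq
  obtain ⟨j, hj, hjq⟩ := Finset.mem_biUnion.mp hq
  rw [Finset.mem_range] at hj
  obtain ⟨w, hw, he⟩ := Finset.mem_image.mp hjq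
  obtain ⟨hw1, hw2⟩ := Finset.mem_product.mp hw
  rw [Finset.mem_Icc] at hw2
  have hwlen : w.1.length = j := (mem_exactLists _ _).mp hw1
  subst he
  have hlen : (a ++ w.1).length = k + j := by simp [ha, hwlen]
  have hane : a ++ w.1 ≠ [] := by
    intro h
    have := congrArg List.length h
    simp [ha] at this
    omega
  refine ⟨by simp; omega, ?_, fun h => absurd h hane, fun _ => ⟨hw2.1, ?_⟩⟩
  · calc w.2 ≤ 2 ^ (n - k - j) := hw2.2
      _ ≤ 2 ^ n := Nat.pow_le_pow_right (by norm_num) (by omega)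
  · have : n - (a ++ w.1).length = n - k - j := by rw [hlen]; omega
    rw [this]
    exact hw2.2

/-- The address of coordinate `i`: the indicator list of `i` in `Fin m`. -/
def addr (m : ℕ) (i : Fin m) : List Bool := List.ofFn fun j : Fin m => decide (i = j)

lemma addr_length (m : ℕ) (i : Fin m) : (addr m i).length = m := by simp [addr]

lemma addr_ne_nil (m : ℕ) (i : Fin m) : addr m i ≠ [] := by
  intro h
  have := congrArg List.length h
  rw [addr_length] at this
  simp at this
  have h2 := i.2
  omega

lemma addr_injective (m : ℕ) : Function.Injective (addr m) := by
  intro i j h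
  have h0 := List.ofFn_injective h
  have h1 := congrFun h0 i
  simp only [decide_eq_decide] at h1
  exact (h1.mp trivial).symm

end HamLam
namespace HamLam
open SimpleGraph Finset
variable {n : ℕ}

/-- The lamp configuration encoding a point of the Hamming cube. -/
def Acfg (n m : ℕ) (x : Fin m → Bool) : Finset (Wvertex 2 n) :=
  (Finset.univ.filter fun i => x i = true).biUnion fun i => Tfin n m (addr m i)

lemma T_disjoint {m : ℕ} (hm : m ≤ n) {i j : Fin m} (hij : i ≠ j) :
    Disjoint (Tfin n m (addr m i)) (Tfin n m (addr m j)) := by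
  rw [Finset.disjoint_left]
  intro v hvi hvj
  rw [mem_Tfin hm (addr_length m i) (addr_ne_nil m i)] at hvi
  rw [mem_Tfin hm (addr_length m j) (addr_ne_nil m j)] at hvj
  apply hij
  apply addr_injective m
  rcases List.prefix_or_prefix_of_prefix hvi hvj with h | h
  · exact h.eq_of_length (by rw [addr_length, addr_length])
  · exact (h.eq_of_length (by rw [addr_length, addr_length])).symm

lemma Acfg_symmDiff {m : ℕ} (hm : m ≤ n) (x y : Fin m → Bool) :
    Acfg n m x ∆ Acfg n m y =
      (Finset.univ.filter fun i => x i ≠ y i).biUnion fun i => Tfin n m (addr m i) := by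
  ext v
  simp only [Finset.mem_symmDiff, Acfg, Finset.mem_biUnion, Finset.mem_filter,
    Finset.mem_univ, true_and]
  constructor
  · rintro (⟨⟨i, hxi, hvi⟩, hnot⟩ | ⟨⟨i, hyi, hvi⟩, hnot⟩)
    · refine ⟨i, fun he => hnot ⟨i, ?_, hvi⟩, hvi⟩
      rw [← he]; exact hxi
    · refine ⟨i, fun he => hnot ⟨i, ?_, hvi⟩, hvi⟩
      rw [he]; exact hyi
  · rintro ⟨i, hne, hvi⟩
    have huniq : ∀ j : Fin m, v ∈ Tfin n m (addr m j) → j = i := by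
      intro j hvj
      by_contra hji
      exact (Finset.disjoint_left.mp (T_disjoint hm hji) hvj) hvi
    cases hx : x i
    · have hy : y i = true := by
        cases hy : y i
        · rw [hx, hy] at hne; exact absurd rfl hne
        · rfl
      refine Or.inr ⟨⟨i, hy, hvi⟩, ?_⟩
      rintro ⟨j, hxj, hvj⟩
      rw [huniq j hvj] at hxj
      rw [hx] at hxj; exact Bool.noConfusion hxj
    · refine Or.inl ⟨⟨i, hx, hvi⟩, ?_⟩
      rintro ⟨j, hyj, hvj⟩
      rw [huniq j hvj] at hyj
      have : y i ≠ true := fun h => hne (hx.trans h.symm)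
      exact this hyj

lemma card_biUnion_T {m : ℕ} (hm : m ≤ n) (Δ : Finset (Fin m)) :
    (Δ.biUnion fun i => Tfin n m (addr m i)).card =
      Δ.card * ((n - m + 1) * 2 ^ (n - m)) := by
  rw [Finset.card_biUnion (fun i _ j _ hij => T_disjoint hm hij)]
  rw [Finset.sum_congr rfl (fun i _ => card_Tfin hm i.pos (addr_length m i))]
  rw [Finset.sum_const, smul_eq_mul]

lemma not_anc_root {v : Wvertex 2 n} (hv : v.1.1 ≠ []) :
    ¬ anc v (node n [] (by simp)) := by
  rintro ⟨hp, -⟩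
  exact hv (List.prefix_nil.mp hp)

lemma mem_ne_nil {m : ℕ} (hm : m ≤ n) {Δ : Finset (Fin m)} {v : Wvertex 2 n}
    (hv : v ∈ Δ.biUnion fun i => Tfin n m (addr m i)) : v.1.1 ≠ [] := by
  obtain ⟨i, -, hvi⟩ := Finset.mem_biUnion.mp hv
  rw [mem_Tfin hm (addr_length m i) (addr_ne_nil m i)] at hvi
  intro h
  rw [h] at hvi
  exact addr_ne_nil m i (List.prefix_nil.mp hvi)

end HamLam
namespace HamLam
open SimpleGraph Finset

/-- Key quantitative embedding: `H_m → Lam(W_{2,n})` with two-sided distance bounds. -/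
theorem key (n m : ℕ) (hm : m ≤ n) :
    ∃ f : (Fin m → Bool) → Finset (Wvertex 2 n) × Wvertex 2 n,
      ∀ x y : Fin m → Bool,
        3 * (hamCubeDist x y * ((n - m + 1) * 2 ^ (n - m))) ≤
            (Lam (WGraph 2 n)).dist (f x) (f y) ∧
          (Lam (WGraph 2 n)).dist (f x) (f y) ≤
            hamCubeDist x y * (2 * 2 ^ n + (n - m) * 2 ^ (n - m + 1)) +
              hamCubeDist x y * ((n - m + 1) * 2 ^ (n - m)) := by
  classical
  set root : Wvertex 2 n := node n [] (by simp) with hroot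
  set V := (n - m + 1) * 2 ^ (n - m) with hV
  refine ⟨fun x => (Acfg n m x, root), ?_⟩
  intro x y
  set Δ : Finset (Fin m) := Finset.univ.filter fun i => x i ≠ y i with hΔ
  have hham : hamCubeDist x y = Δ.card := rfl
  set S := Δ.biUnion (fun i => Tfin n m (addr m i)) with hS
  have hSd : Acfg n m x ∆ Acfg n m y = S := Acfg_symmDiff hm x y
  have hScard : S.card = Δ.card * V := card_biUnion_T hm Δ
  have hAS : Acfg n m x ∆ S = Acfg n m y := by
    rw [← hSd]; exact symmDiff_symmDiff_cancel_left _ _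
  -- upper bound walk
  obtain ⟨w, hwl, hws⟩ := exists_listWalk (n := n) m hm (Δ.toList.map (addr m)) (by
    intro p hp
    obtain ⟨i, -, rfl⟩ := List.mem_map.mp hp
    exact addr_length m i)
  have hcov : ∀ v ∈ S, v ∈ w.support := by
    intro v hv
    obtain ⟨i, hiΔ, hvT⟩ := Finset.mem_biUnion.mp hv
    have hpre := (mem_Tfin hm (addr_length m i) (addr_ne_nil m i) v).mp hvT
    exact hws (addr m i) (List.mem_map.mpr ⟨i, Finset.mem_toList.mpr hiΔ, rfl⟩) v hpre
  obtain ⟨W, hWl⟩ := exists_lamWalk w (Acfg n m x) S hcov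
  have hend : ((Acfg n m x ∆ S, root) : Finset (Wvertex 2 n) × Wvertex 2 n) =
      (Acfg n m y, root) := by rw [hAS]
  have hlen : (Δ.toList.map (addr m)).length = Δ.card := by
    simp [Finset.length_toList]
  constructor
  · -- lower bound
    have hreach : (Lam (WGraph 2 n)).Reachable (Acfg n m x, root) (Acfg n m y, root) :=
      ⟨W.copy rfl hend⟩
    obtain ⟨q, hq⟩ := hreach.exists_walk_length_eq_dist
    have hwalk := phi_walk (Bc := Acfg n m y) (U := S) q
    have hphiy : phiF (Acfg n m y) S (Acfg n m y, root) = 0 := by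
      unfold phiF
      simp only [symmDiff_self]
      rw [Finset.bot_eq_empty, Finset.card_empty]
      have hz : ∀ v ∈ S, (if ∃ w ∈ (∅ : Finset (Wvertex 2 n)), anc v w then
          (if anc v root then 1 else 2) else (if anc v root then 1 else 0)) = 0 := by
        intro v hv
        have hvne : v.1.1 ≠ [] := mem_ne_nil hm hv
        rw [if_neg, if_neg (not_anc_root hvne)]
        rintro ⟨u, hu, -⟩
        simp at hu
      rw [Finset.sum_eq_zero hz]
      rfl
    have hphix : phiF (Acfg n m y) S (Acfg n m x, root) = 3 * (Δ.card * V) := by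
      unfold phiF
      rw [hSd, hScard]
      have hz : ∀ v ∈ S, (if ∃ w ∈ S, anc v w then
          (if anc v root then 1 else 2) else (if anc v root then 1 else 0)) = 2 := by
        intro v hv
        rw [if_pos ⟨v, hv, anc_refl v⟩, if_neg (not_anc_root (mem_ne_nil hm hv))]
      rw [Finset.sum_congr rfl hz, Finset.sum_const, smul_eq_mul, hScard]
      ring
    rw [hphiy, hphix, hq] at hwalk
    rw [hham]
    simpa using hwalk
  · -- upper bound
    have hle := SimpleGraph.dist_le (W.copy rfl hend)
    rw [SimpleGraph.Walk.length_copy, hWl, hScard] at hle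
    have hwl' : w.length ≤ Δ.card * (2 * 2 ^ n + (n - m) * 2 ^ (n - m + 1)) := by
      rw [hlen] at hwl
      exact hwl
    rw [hham]
    exact hle.trans (Nat.add_le_add_right hwl' _)

end HamLam

theorem Hamming_cubes_into_lamplighters' (ε : ℝ) (hε : 0 < ε) (m : ℕ) :
    ∃ (n : ℕ) (f : (Fin m → Bool) → Finset (Wvertex 2 n) × Wvertex 2 n) (lam : ℝ),
      0 < lam ∧ ∀ x y : Fin m → Bool,
        lam * hamCubeDist x y ≤ ((Lam (WGraph 2 n)).dist (f x) (f y) : ℝ) ∧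
          ((Lam (WGraph 2 n)).dist (f x) (f y) : ℝ) ≤ (1 + ε) * lam * hamCubeDist x y := by
  classical
  set N := ⌈(2:ℝ) ^ (m + 1) / (3 * ε)⌉₊ with hNdef
  have hε3 : (0:ℝ) < 3 * ε := by linarith
  have hNle : (2:ℝ) ^ (m + 1) ≤ 3 * ε * N := by
    have h1 : (2:ℝ) ^ (m + 1) / (3 * ε) ≤ N := Nat.le_ceil _
    calc (2:ℝ) ^ (m + 1) = (2:ℝ) ^ (m + 1) / (3 * ε) * (3 * ε) := by field_simp
      _ ≤ N * (3 * ε) := mul_le_mul_of_nonneg_right h1 (by linarith)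
      _ = 3 * ε * N := by ring
  obtain ⟨f, hf⟩ := HamLam.key (m + N) m (Nat.le_add_right m N)
  have hnm : m + N - m = N := by omega
  refine ⟨m + N, f, ((3 * ((N + 1) * 2 ^ N) : ℕ) : ℝ), ?_, ?_⟩
  · positivity
  intro x y
  obtain ⟨hlow, hup⟩ := hf x y
  rw [hnm] at hlow hup
  set d := hamCubeDist x y with hd
  have hP : (0:ℝ) < 2 ^ N := by positivity
  constructor
  · have := (Nat.cast_le (α := ℝ)).mpr hlow
    push_cast at this ⊢
    linarith
  · have := (Nat.cast_le (α := ℝ)).mpr hup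
    push_cast at this ⊢
    have harith : (2 * 2 ^ (m + N) + N * 2 ^ (N + 1) + (N + 1) * 2 ^ N : ℝ) ≤
        (1 + ε) * (3 * ((N + 1) * 2 ^ N)) := by
      have e1 : (2:ℝ) ^ (m + N) = 2 ^ m * 2 ^ N := by rw [pow_add]
      have e2 : (2:ℝ) ^ (N + 1) = 2 * 2 ^ N := by rw [pow_succ]; ring
      have e3 : (2:ℝ) ^ (m + 1) = 2 * 2 ^ m := by rw [pow_succ]; ring
      rw [e1, e2]
      rw [e3] at hNle
      nlinarith [mul_le_mul_of_nonneg_right hNle hP.le, hP.le, hε.le,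
        mul_nonneg (mul_nonneg hε.le (Nat.cast_nonneg N)) hP.le,
        mul_nonneg hε.le hP.le]
    have hd0 : (0:ℝ) ≤ (d : ℝ) := Nat.cast_nonneg d
    calc ((Lam (WGraph 2 (m + N))).dist (f x) (f y) : ℝ) ≤
        d * (2 * 2 ^ (m + N) + N * 2 ^ (N + 1)) + d * ((N + 1) * 2 ^ N) := this
      _ = d * (2 * 2 ^ (m + N) + N * 2 ^ (N + 1) + (N + 1) * 2 ^ N) := by ring
      _ ≤ d * ((1 + ε) * (3 * ((N + 1) * 2 ^ N))) := by
          exact mul_le_mul_of_nonneg_left harith hd0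
      _ = (1 + ε) * (3 * ((N + 1) * 2 ^ N)) * d := by ring
/-- for every `ε > 0`, the sequence of Hamming cubes `(H_m)` embeds into the
sequence of lamplighter graphs `(Lam(W_{2,n}))` with distortion at most `1 + ε`: for each `m`
there are `n` and a map `f : H_m → Lam(W_{2,n})` with distortion at most `1 + ε`. -/
theorem Hamming_cubes_into_lamplighters (ε : ℝ) (hε : 0 < ε) (m : ℕ) :
    ∃ (n : ℕ) (f : (Fin m → Bool) → Finset (Wvertex 2 n) × Wvertex 2 n) (lam : ℝ),
      0 < lam ∧ ∀ x y : Fin m → Bool,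
        lam * hamCubeDist x y ≤ ((Lam (WGraph 2 n)).dist (f x) (f y) : ℝ) ∧
          ((Lam (WGraph 2 n)).dist (f x) (f y) : ℝ) ≤ (1 + ε) * lam * hamCubeDist x y := by
  exact Hamming_cubes_into_lamplighters' ε hε m
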